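/- arXiv:2106.14840 — 8 statements merged into one kernel-verified Lean document; each statement's English description precedes it below -/
import Mathlib

section
/- For every real p > 1, setting a := 8^{p/(p−1)}, the strict inequality (3a+3)^p + 3(3a+2)^p + 4^p > 4(3a+2)^p + 8^p holds. (This inequality shows that in the example of Figure 1, the multiway cut placing the non-terminal u₂ with the terminal u₁, which yields a disconnected part, has strictly smaller ℓ_p-norm objective value than any multiway cut placing u₂ with one of the other terminals.) -/
/-- For every `p > 1` and `a = 8^{p/(p−1)}`, we have
`(3a+3)^p + 3(3a+2)^p + 4^p > 4(3a+2)^p + 8^p`. -/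
theorem disconnected_example_inequality (p : ℝ) (hp : 1 < p) (a : ℝ)
    (ha : a = (8 : ℝ) ^ (p / (p - 1))) :
    4 * (3 * a + 2) ^ p + 8 ^ p < (3 * a + 3) ^ p + 3 * (3 * a + 2) ^ p + 4 ^ p := by
  have hp0 : (0:ℝ) < p := by linarith
  have hp1 : p - 1 ≠ 0 := by intro h; linarith [sub_eq_zero.mp h]
  have ha0 : 0 < a := ha ▸ Real.rpow_pos_of_pos (by norm_num) _
  set x : ℝ := 3 * a + 2 with hx
  have hx0 : (0:ℝ) < x := by positivity
  -- a^(p-1) = 8^p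
  have hap : a ^ (p - 1) = (8:ℝ) ^ p := by
    rw [ha, ← Real.rpow_mul (by norm_num), div_mul_cancel₀ _ hp1]
  -- Bernoulli: (x+1)^p ≥ x^p + p * x^(p-1)
  have hbern : x ^ p * (1 + p * (1 / x)) ≤ (x + 1) ^ p := by
    have h1 : (1:ℝ) + p * (1 / x) ≤ (1 + 1 / x) ^ p :=
      one_add_mul_self_le_rpow_one_add (by linarith [one_div_pos.mpr hx0]) hp.le
    calc x ^ p * (1 + p * (1 / x)) ≤ x ^ p * (1 + 1 / x) ^ p := by
          exact mul_le_mul_of_nonneg_left h1 (Real.rpow_nonneg hx0.le p)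
      _ = (x * (1 + 1 / x)) ^ p := (Real.mul_rpow hx0.le (by positivity)).symm
      _ = (x + 1) ^ p := by rw [mul_add, mul_one_div, mul_one, div_self hx0.ne']
  have hxp : x ^ p * (p * (1 / x)) = p * x ^ (p - 1) := by
    rw [Real.rpow_sub_one hx0.ne']; ring
  -- p * x^(p-1) > 8^p
  have hkey : (8:ℝ) ^ p < p * x ^ (p - 1) := by
    have h2 : a ^ (p - 1) ≤ x ^ (p - 1) :=
      Real.rpow_le_rpow ha0.le (by linarith) (by linarith)
    have h3 : x ^ (p - 1) < p * x ^ (p - 1) := by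
      nlinarith [Real.rpow_pos_of_pos hx0 (p - 1)]
    calc (8:ℝ) ^ p = a ^ (p - 1) := hap.symm
      _ ≤ x ^ (p - 1) := h2
      _ < p * x ^ (p - 1) := h3
  have h4 : (0:ℝ) < (4:ℝ) ^ p := Real.rpow_pos_of_pos (by norm_num) _
  have hfin : x ^ p + (8:ℝ) ^ p < (x + 1) ^ p := by
    nlinarith [hbern, hxp, hkey]
  have : (3 * a + 3 : ℝ) = x + 1 := by rw [hx]; ring
  rw [this]
  nlinarith [hfin, h4]
end

section
/- Let p ≥ 1 be real, c ≥ 0 a real number, ℓ ≥ 1 an integer, and a₁, …, a_ℓ nonnegative reals. Then (c + Σ_{q=1}^ℓ a_q)^p + (ℓ − 1)·c^p ≥ Σ_{q=1}^ℓ (c + a_q)^p. -/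
open Finset

lemma key_two (p c x y : ℝ) (hp : 1 ≤ p) (hc : 0 ≤ c) (hx : 0 ≤ x) (hy : 0 ≤ y) :
    (c + x) ^ p + (c + y) ^ p ≤ (c + (x + y)) ^ p + c ^ p := by
  rcases eq_or_lt_of_le (by positivity : (0:ℝ) ≤ x + y) with h | h
  · have hx0 : x = 0 := by linarith [hx, hy]
    have hy0 : y = 0 := by linarith
    simp [hx0, hy0]
  · set s := x + y with hs
    have hcv := convexOn_rpow hp
    have hmem1 : c ∈ Set.Ici (0:ℝ) := hc
    have hmem2 : c + s ∈ Set.Ici (0:ℝ) := by simp only [Set.mem_Ici]; linarith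
    have hposys : (0:ℝ) ≤ y / s := by positivity
    have hposxs : (0:ℝ) ≤ x / s := by positivity
    have hsne : s ≠ 0 := ne_of_gt h
    have hab : y / s + x / s = 1 := by rw [← add_div, add_comm, ← hs, div_self hsne]
    have hab' : x / s + y / s = 1 := by rw [← add_div, ← hs, div_self hsne]
    have h1 := hcv.2 hmem1 hmem2 hposys hposxs hab
    have h2 := hcv.2 hmem1 hmem2 hposxs hposys hab'
    have e1 : (y / s) • c + (x / s) • (c + s) = c + x := by
      simp only [smul_eq_mul]; field_simp
      rw [hs]; ring
    have e2 : (x / s) • c + (y / s) • (c + s) = c + y := by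
      simp only [smul_eq_mul]; field_simp
      rw [hs]; ring
    rw [e1] at h1
    rw [e2] at h2
    simp only [smul_eq_mul] at h1 h2
    have hsum := add_le_add h1 h2
    have hid : y / s * c ^ p + x / s * (c + s) ^ p + (x / s * c ^ p + y / s * (c + s) ^ p)
        = (c + s) ^ p + c ^ p := by linear_combination (c ^ p + (c + s) ^ p) * hab
    show (c + x) ^ p + (c + y) ^ p ≤ (c + s) ^ p + c ^ p
    linarith

lemma key_sum {ι : Type*} (p c : ℝ) (hp : 1 ≤ p) (hc : 0 ≤ c) (s : Finset ι)
    (hs : s.Nonempty) (a : ι → ℝ) (ha : ∀ q, 0 ≤ a q) :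
    ∑ q ∈ s, (c + a q) ^ p ≤ (c + ∑ q ∈ s, a q) ^ p + ((s.card : ℝ) - 1) * c ^ p := by
  induction hs using Finset.Nonempty.cons_induction with
  | singleton i => simp
  | cons i t hit ht ih =>
      rw [Finset.sum_cons, Finset.sum_cons, Finset.card_cons]
      have hsum : 0 ≤ ∑ q ∈ t, a q := Finset.sum_nonneg fun q _ => ha q
      have := key_two p c (a i) (∑ q ∈ t, a q) hp hc (ha i) hsum
      push_cast
      calc (c + a i) ^ p + ∑ q ∈ t, (c + a q) ^ p
          ≤ (c + a i) ^ p + ((c + ∑ q ∈ t, a q) ^ p + ((t.card : ℝ) - 1) * c ^ p) := by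
            linarith [ih]
        _ ≤ (c + (a i + ∑ q ∈ t, a q)) ^ p + c ^ p + ((t.card : ℝ) - 1) * c ^ p := by
            linarith [this]
        _ = (c + (a i + ∑ q ∈ t, a q)) ^ p + ((t.card : ℝ) + 1 - 1) * c ^ p := by ring

/-- For `p ≥ 1`, `c ≥ 0`, `ℓ ≥ 1` and nonnegative `a₁,…,a_ℓ`:
`(c + Σ a_q)^p + (ℓ−1)·c^p ≥ Σ (c + a_q)^p`. -/
theorem merge_rpow_bound (p c : ℝ) (hp : 1 ≤ p) (hc : 0 ≤ c) (ℓ : ℕ) (hℓ : 1 ≤ ℓ)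
    (a : Fin ℓ → ℝ) (ha : ∀ q, 0 ≤ a q) :
    ∑ q, (c + a q) ^ p ≤ (c + ∑ q, a q) ^ p + ((ℓ : ℝ) - 1) * c ^ p := by
  have hne : (Finset.univ : Finset (Fin ℓ)).Nonempty := ⟨⟨0, by omega⟩, Finset.mem_univ _⟩
  have := key_sum p c hp hc Finset.univ hne a ha
  simpa using this
end

section
/- Let p ≥ 1 be real, k ≥ 1 an integer, D > 0 real, y₁, …, y_k nonnegative reals with Y := Σ_{i=1}^k y_i > 0, and w₁, …, w_k nonnegative reals with Σ_{i=1}^k w_i^p ≤ D. Then there exists an index q ∈ [k] such that y_q > Y/(2k) and w_q^p ≤ 2·y_q·D/Y. -/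
open Finset

/-- Averaging claim behind the multiplicative-weights step: if `Σ w_i^p ≤ D`, there is an
index `q` with `y_q > Y/(2k)` and `w_q^p ≤ 2·y_q·D/Y`, where `Y = Σ y_i > 0`. -/
theorem heavy_low_cut_part_exists (p : ℝ) (hp : 1 ≤ p) (k : ℕ) (hk : 1 ≤ k)
    (D : ℝ) (hD : 0 < D) (y w : Fin k → ℝ)
    (hy : ∀ i, 0 ≤ y i) (hw : ∀ i, 0 ≤ w i)
    (hY : 0 < ∑ i, y i) (hwD : ∑ i, (w i) ^ p ≤ D) :
    ∃ q : Fin k, (∑ i, y i) / (2 * k) < y q ∧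
      (w q) ^ p ≤ 2 * y q * D / (∑ i, y i) := by
  by_contra hcon
  push_neg at hcon
  set Y := ∑ i, y i with hYdef
  have hk0 : (0:ℝ) < k := by exact_mod_cast hk
  set S : Finset (Fin k) := Finset.univ.filter (fun i => Y / (2 * k) < y i) with hS
  -- sum of y over complement is ≤ Y/2
  have hcompl : ∑ i ∈ Finset.univ \ S, y i ≤ Y / 2 := by
    have h1 : ∑ i ∈ Finset.univ \ S, y i ≤ ∑ _i ∈ Finset.univ \ S, Y / (2 * k) := by
      apply Finset.sum_le_sum
      intro i hi
      simp only [hS, Finset.mem_sdiff, Finset.mem_filter, Finset.mem_univ, true_and,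
        not_lt] at hi
      exact hi
    have h2 : ∑ _i ∈ Finset.univ \ S, Y / (2 * k) ≤ Y / 2 := by
      rw [Finset.sum_const, nsmul_eq_mul]
      have hcard : ((Finset.univ \ S).card : ℝ) ≤ k := by
        exact_mod_cast (Finset.card_le_card (Finset.subset_univ _)).trans
          (by simp [Fintype.card_fin])
      have hpos : 0 < Y / (2 * k) := by positivity
      calc ((Finset.univ \ S).card : ℝ) * (Y / (2 * k)) ≤ k * (Y / (2 * k)) := by
            exact mul_le_mul_of_nonneg_right hcard hpos.le
        _ = Y / 2 := by field_simp
    linarith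
  have hSy : Y / 2 ≤ ∑ i ∈ S, y i := by
    have := Finset.sum_sdiff_eq_sub (Finset.subset_univ S) (f := y)
    have : ∑ i ∈ S, y i = Y - ∑ i ∈ Finset.univ \ S, y i := by
      rw [this, hYdef]; ring
    linarith
  -- lower bound sum of w^p over S
  have hwS : ∀ i ∈ S, 2 * y i * D / Y < (w i) ^ p := by
    intro i hi
    simp only [hS, Finset.mem_filter, Finset.mem_univ, true_and] at hi
    exact hcon i hi
  have hsum : ∑ i ∈ S, 2 * y i * D / Y < ∑ i ∈ S, (w i) ^ p := by
    apply Finset.sum_lt_sum_of_nonempty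
    · refine Finset.nonempty_of_sum_ne_zero ?_ (f := y)
      intro h
      rw [h] at hSy
      linarith
    · exact hwS
  have hsum2 : D ≤ ∑ i ∈ S, 2 * y i * D / Y := by
    have : ∑ i ∈ S, 2 * y i * D / Y = (∑ i ∈ S, y i) * (2 * D / Y) := by
      rw [Finset.sum_mul]
      apply Finset.sum_congr rfl
      intro i _
      field_simp
    rw [this]
    have : Y / 2 * (2 * D / Y) ≤ (∑ i ∈ S, y i) * (2 * D / Y) := by
      apply mul_le_mul_of_nonneg_right hSy
      positivity
    calc D = Y / 2 * (2 * D / Y) := by field_simp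
      _ ≤ _ := this
  have hsub : ∑ i ∈ S, (w i) ^ p ≤ ∑ i, (w i) ^ p := by
    apply Finset.sum_le_sum_of_subset_of_nonneg (Finset.subset_univ S)
    intro i _ _
    exact Real.rpow_nonneg (hw i) p
  linarith
end

section
/- Let V be a finite set, let f : 2^V → ℝ be a nonnegative, symmetric (f(S) = f(V∖S) for all S), submodular (f(A)+f(B) ≥ f(A∩B)+f(A∪B) for all A,B) set function, let p ≥ 1 be real, and let S₁, …, S_m ⊆ V be subsets with S₁ ∪ ⋯ ∪ S_m = V. Then there exists a partition 𝒬 of V into nonempty pairwise disjoint parts such that: (1) every part Q ∈ 𝒬 is contained in some S_i (in particular, if each S_i contains at most one element of a designated terminal set T ⊆ V, then so does each part of 𝒬); (2) |𝒬| ≤ m; and (3) Σ_{Q ∈ 𝒬} f(Q)^p ≤ Σ_{i=1}^m f(S_i)^p. -/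
open Finset


/-- One uncrossing step: replace `Q i` by `Q i \ Q j`. -/
lemma uncross_step {V : Type*} [Fintype V] [DecidableEq V] (f : Finset V → ℝ)
    (p : ℝ) (hp0 : 0 ≤ p) (hnonneg : ∀ S, 0 ≤ f S) {m : ℕ} (Q : Fin m → Finset V)
    (i j : Fin m) (hij : i ≠ j) (hf : f (Q i \ Q j) ≤ f (Q i)) :
    (∀ k, Function.update Q i (Q i \ Q j) k ⊆ Q k) ∧
    Finset.univ.biUnion (Function.update Q i (Q i \ Q j)) = Finset.univ.biUnion Q ∧
    ∑ k, f (Function.update Q i (Q i \ Q j) k) ^ p ≤ ∑ k, f (Q k) ^ p := by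
  refine ⟨?_, ?_, ?_⟩
  · intro k
    rcases eq_or_ne k i with rfl | hk
    · simp [Function.update_self, Finset.sdiff_subset]
    · simp [Function.update_of_ne hk]
  · ext x
    simp only [Finset.mem_biUnion, Finset.mem_univ, true_and]
    constructor
    · rintro ⟨k, hk⟩
      rcases eq_or_ne k i with rfl | hne
      · exact ⟨k, by simpa using (Finset.sdiff_subset (by simpa [Function.update_self] using hk))⟩
      · exact ⟨k, by simpa [Function.update_of_ne hne] using hk⟩
    · rintro ⟨k, hk⟩
      rcases eq_or_ne k i with rfl | hne
      · by_cases hxj : x ∈ Q j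
        · exact ⟨j, by simpa [Function.update_of_ne (Ne.symm hij)] using hxj⟩
        · exact ⟨k, by simp [Function.update_self, hk, hxj]⟩
      · exact ⟨k, by simpa [Function.update_of_ne hne] using hk⟩
  · rw [← Finset.add_sum_erase _ _ (Finset.mem_univ i),
        ← Finset.add_sum_erase _ _ (Finset.mem_univ i)]
    have h1 : f (Function.update Q i (Q i \ Q j) i) ^ p ≤ f (Q i) ^ p := by
      rw [Function.update_self]
      exact Real.rpow_le_rpow (hnonneg _) hf hp0
    have h2 : ∑ k ∈ Finset.univ.erase i, f (Function.update Q i (Q i \ Q j) k) ^ p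
        = ∑ k ∈ Finset.univ.erase i, f (Q k) ^ p := by
      refine Finset.sum_congr rfl fun k hk => ?_
      rw [Function.update_of_ne (Finset.ne_of_mem_erase hk)]
    rw [h2]
    exact add_le_add h1 le_rfl

/-- Disjointification by strong induction on the total size. -/
lemma uncross_aux {V : Type*} [Fintype V] [DecidableEq V] (f : Finset V → ℝ)
    (hnonneg : ∀ S, 0 ≤ f S)
    (hposi : ∀ A B : Finset V, f (A \ B) + f (B \ A) ≤ f A + f B)
    (p : ℝ) (hp0 : 0 ≤ p) {m : ℕ} :
    ∀ (n : ℕ) (Q : Fin m → Finset V), (∑ i, (Q i).card) ≤ n →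
    ∃ Q' : Fin m → Finset V,
      (∀ i, Q' i ⊆ Q i) ∧
      (∀ i j, i ≠ j → Disjoint (Q' i) (Q' j)) ∧
      Finset.univ.biUnion Q' = Finset.univ.biUnion Q ∧
      ∑ i, f (Q' i) ^ p ≤ ∑ i, f (Q i) ^ p := by
  intro n
  induction n with
  | zero =>
      intro Q hQ
      refine ⟨Q, fun i => le_refl _, ?_, rfl, le_refl _⟩
      intro i j hij
      have : (Q i).card = 0 := by
        have h := Finset.single_le_sum (f := fun i => (Q i).card) (fun _ _ => Nat.zero_le _)
          (Finset.mem_univ i)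
        omega
      simp [Finset.card_eq_zero.mp this]
  | succ n ih =>
      intro Q hQ
      by_cases hdisj : ∀ i j, i ≠ j → Disjoint (Q i) (Q j)
      · exact ⟨Q, fun i => le_refl _, hdisj, rfl, le_refl _⟩
      · push_neg at hdisj
        obtain ⟨i, j, hij, hnd⟩ := hdisj
        have hne : (Q i ∩ Q j).Nonempty := by
          rw [Finset.not_disjoint_iff_nonempty_inter] at hnd; exact hnd
        -- one of the two directions works
        have hcase : f (Q i \ Q j) ≤ f (Q i) ∨ f (Q j \ Q i) ≤ f (Q j) := by
          by_contra h
          push_neg at h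
          have := hposi (Q i) (Q j)
          linarith [h.1, h.2]
        -- helper to finish given a valid direction
        have finish : ∀ (a b : Fin m), a ≠ b → (Q a ∩ Q b).Nonempty →
            f (Q a \ Q b) ≤ f (Q a) →
            ∃ Q' : Fin m → Finset V,
              (∀ k, Q' k ⊆ Q k) ∧
              (∀ k l, k ≠ l → Disjoint (Q' k) (Q' l)) ∧
              Finset.univ.biUnion Q' = Finset.univ.biUnion Q ∧
              ∑ k, f (Q' k) ^ p ≤ ∑ k, f (Q k) ^ p := by
          intro a b hab hab' hfa
          obtain ⟨hsub1, hun1, hsum1⟩ := uncross_step f p hp0 hnonneg Q a b hab hfa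
          set Q₁ := Function.update Q a (Q a \ Q b) with hQ₁
          have hcard : (∑ k, (Q₁ k).card) ≤ n := by
            have hlt : (Q₁ a).card < (Q a).card := by
              apply Finset.card_lt_card
              rw [hQ₁, Function.update_self]
              refine ⟨Finset.sdiff_subset, ?_⟩
              intro hsub
              obtain ⟨x, hx⟩ := hab'
              have hx1 := Finset.mem_of_mem_inter_left hx
              have hx2 := Finset.mem_of_mem_inter_right hx
              have := hsub hx1
              simp [Finset.mem_sdiff, hx2] at this
            have e1 := (Finset.add_sum_erase Finset.univ (fun k => (Q₁ k).card)
              (Finset.mem_univ a)).symm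
            have e2 := (Finset.add_sum_erase Finset.univ (fun k => (Q k).card)
              (Finset.mem_univ a)).symm
            have e3 : ∑ k ∈ Finset.univ.erase a, (Q₁ k).card
                = ∑ k ∈ Finset.univ.erase a, (Q k).card := by
              refine Finset.sum_congr rfl fun k hk => ?_
              rw [hQ₁, Function.update_of_ne (Finset.ne_of_mem_erase hk)]
            omega
          obtain ⟨Q', h1, h2, h3, h4⟩ := ih Q₁ hcard
          refine ⟨Q', fun k => (h1 k).trans (hsub1 k), h2, h3.trans hun1, h4.trans hsum1⟩
        rcases hcase with h | h
        · exact finish i j hij hne h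
        · exact finish j i (Ne.symm hij) (by rwa [Finset.inter_comm]) h

/-- Uncrossing lemma: given a nonnegative symmetric submodular set function `f`, `p ≥ 1`,
and sets `S₁,…,S_m` covering `V`, there is a partition `𝒬` of `V` into nonempty pairwise
disjoint parts, each contained in some `S_i`, with at most `m` parts and
`Σ_{Q ∈ 𝒬} f(Q)^p ≤ Σ_i f(S_i)^p`. -/
theorem uncrossing_lemma {V : Type*} [Fintype V] [DecidableEq V] (f : Finset V → ℝ)
    (hnonneg : ∀ S, 0 ≤ f S) (hsym : ∀ S : Finset V, f S = f Sᶜ)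
    (hsub : ∀ A B : Finset V, f (A ∩ B) + f (A ∪ B) ≤ f A + f B)
    (p : ℝ) (hp : 1 ≤ p) (m : ℕ) (S : Fin m → Finset V)
    (hcover : Finset.univ.biUnion (fun i => S i) = (Finset.univ : Finset V)) :
    ∃ 𝒬 : Finset (Finset V),
      (∀ Q ∈ 𝒬, Q ≠ ∅) ∧
      (∀ Q ∈ 𝒬, ∀ Q' ∈ 𝒬, Q ≠ Q' → Disjoint Q Q') ∧
      𝒬.biUnion id = (Finset.univ : Finset V) ∧
      (∀ Q ∈ 𝒬, ∃ i : Fin m, Q ⊆ S i) ∧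
      𝒬.card ≤ m ∧
      ∑ Q ∈ 𝒬, f Q ^ p ≤ ∑ i, f (S i) ^ p := by
  have hp0 : (0:ℝ) ≤ p := le_trans zero_le_one hp
  -- posimodularity
  have hposi : ∀ A B : Finset V, f (A \ B) + f (B \ A) ≤ f A + f B := by
    intro A B
    have h := hsub A Bᶜ
    have e1 : A ∩ Bᶜ = A \ B := by
      ext x; simp [Finset.mem_sdiff, Finset.mem_compl]
    have e2 : f (A ∪ Bᶜ) = f (B \ A) := by
      rw [hsym (A ∪ Bᶜ)]
      congr 1
      ext x; simp [Finset.mem_sdiff, Finset.mem_compl, and_comm]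
    rw [e1, e2] at h
    linarith [hsym B ▸ h]
  obtain ⟨Q', h1, h2, h3, h4⟩ := uncross_aux f hnonneg hposi p hp0 (∑ i, (S i).card) S le_rfl
  refine ⟨(Finset.univ.filter (fun i => Q' i ≠ ∅)).image Q', ?_, ?_, ?_, ?_, ?_, ?_⟩
  · intro Q hQ
    simp only [Finset.mem_image, Finset.mem_filter] at hQ
    obtain ⟨i, ⟨_, hne⟩, rfl⟩ := hQ
    exact hne
  · intro A hA B hB hAB
    simp only [Finset.mem_image, Finset.mem_filter] at hA hB
    obtain ⟨i, _, rfl⟩ := hA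
    obtain ⟨j, _, rfl⟩ := hB
    exact h2 i j (fun h => hAB (by rw [h]))
  · ext x
    simp only [Finset.mem_biUnion, Finset.mem_image, Finset.mem_filter, Finset.mem_univ,
      true_and, id]
    constructor
    · intro _; trivial
    · intro _
      have hx : x ∈ Finset.univ.biUnion Q' := by rw [h3, hcover]; exact Finset.mem_univ x
      obtain ⟨i, _, hi⟩ := Finset.mem_biUnion.mp hx
      exact ⟨Q' i, ⟨i, Finset.ne_empty_of_mem hi, rfl⟩, hi⟩
  · intro Q hQ
    simp only [Finset.mem_image, Finset.mem_filter] at hQ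
    obtain ⟨i, _, rfl⟩ := hQ
    exact ⟨i, h1 i⟩
  · calc ((Finset.univ.filter (fun i => Q' i ≠ ∅)).image Q').card
        ≤ (Finset.univ.filter (fun i => Q' i ≠ ∅)).card := Finset.card_image_le
      _ ≤ (Finset.univ : Finset (Fin m)).card := Finset.card_filter_le _ _
      _ = m := by simp
  · have hinj : ∀ a ∈ Finset.univ.filter (fun i => Q' i ≠ ∅),
        ∀ b ∈ Finset.univ.filter (fun i => Q' i ≠ ∅), Q' a = Q' b → a = b := by
      intro a ha b hb hab
      by_contra hne
      have := h2 a b hne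
      rw [hab, disjoint_self] at this
      exact (Finset.mem_filter.mp hb).2 this
    rw [Finset.sum_image hinj]
    calc ∑ i ∈ Finset.univ.filter (fun i => Q' i ≠ ∅), f (Q' i) ^ p
        ≤ ∑ i, f (Q' i) ^ p := by
          apply Finset.sum_le_sum_of_subset_of_nonneg (Finset.filter_subset _ _)
          intro i _ _
          exact Real.rpow_nonneg (hnonneg _) p
      _ ≤ ∑ i, f (S i) ^ p := h4
end

section
/- For every integer k ≥ 2 and real p ≥ 1, the inequality ((k−1)^p + (k−1))^{1/p} ≥ (k^{1−1/p}/2) · (2(k−1)/k) · k^{1/p} holds. (Here ((k−1)^p + (k−1))^{1/p} is the optimal integral ℓ_p-norm multiway-cut value on the unit-weight star with k leaf terminals, while (2(k−1)/k)·k^{1/p} is the objective value of the feasible fractional solution x(v,i) = 1/k of the natural convex programming relaxation; hence the convex program has integrality gap at least k^{1−1/p}/2.) -/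
/-- Integrality gap inequality on the star instance: for `k ≥ 2` and `p ≥ 1`,
`((k−1)^p + (k−1))^{1/p} ≥ (k^{1−1/p}/2) · (2(k−1)/k) · k^{1/p}`. -/
theorem star_integrality_gap (k : ℕ) (hk : 2 ≤ k) (p : ℝ) (hp : 1 ≤ p) :
    ((k : ℝ) ^ (1 - 1 / p) / 2) * (2 * ((k : ℝ) - 1) / k) * (k : ℝ) ^ (1 / p) ≤
      (((k : ℝ) - 1) ^ p + ((k : ℝ) - 1)) ^ (1 / p) := by
  have hk0 : (0:ℝ) < k := by positivity
  have hc : (1:ℝ) ≤ (k:ℝ) - 1 := by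
    have : (2:ℝ) ≤ k := by exact_mod_cast hk
    linarith
  have hc0 : (0:ℝ) < (k:ℝ) - 1 := by linarith
  have hp0 : (0:ℝ) < p := by linarith
  have hkk : (k:ℝ) ^ (1 - 1/p) * (k:ℝ) ^ (1/p) = k := by
    rw [← Real.rpow_add hk0]
    simp
  have hL : ((k : ℝ) ^ (1 - 1 / p) / 2) * (2 * ((k : ℝ) - 1) / k) * (k : ℝ) ^ (1 / p)
      = (k:ℝ) - 1 := by
    have h : ((k : ℝ) ^ (1 - 1 / p) / 2) * (2 * ((k : ℝ) - 1) / k) * (k : ℝ) ^ (1 / p)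
        = ((k:ℝ) ^ (1 - 1/p) * (k:ℝ) ^ (1/p)) * (((k:ℝ) - 1) / k) := by ring
    rw [h, hkk]
    field_simp
  rw [hL]
  have h1 : ((((k:ℝ) - 1) ^ p) ^ (1/p)) = (k:ℝ) - 1 := by
    rw [← Real.rpow_mul hc0.le, mul_one_div_cancel hp0.ne', Real.rpow_one]
  calc (k:ℝ) - 1 = ((((k:ℝ) - 1) ^ p) ^ (1/p)) := h1.symm
    _ ≤ (((k:ℝ) - 1) ^ p + ((k:ℝ) - 1)) ^ (1/p) := by
        apply Real.rpow_le_rpow (by positivity) (by linarith) (by positivity)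
end

section
/- Given a finite set V with symmetric nonnegative edge weights w and distinct terminals t₁, …, t_k ∈ V (k ≥ 1), let S₁, …, S_k ⊆ V be pairwise disjoint sets with t_i ∈ S_i for each i, let (P₁, …, P_k) be a partition of V with t_i ∈ P_i for each i, and suppose cut(S_i) ≤ cut(P_i) for every i (as holds when each S_i is a minimum weight cut separating t_i from the other terminals). Set R := V ∖ (S₁ ∪ ⋯ ∪ S_k). Then for every real p ≥ 1, the partition (S₁ ∪ R, S₂, …, S_k) is a multiway cut satisfying cut(S₁ ∪ R)^p + Σ_{i=2}^k cut(S_i)^p ≤ (2^p·k^{p−1} + 1) · Σ_{i=1}^k cut(P_i)^p; in particular its ℓ_p-norm objective value is at most 3·k^{1−1/p} times that of (P₁, …, P_k). -/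
open Finset

/-- The cut value of `S ⊆ V` with respect to edge weights `w`. -/
noncomputable def cutval {V : Type*} [Fintype V] [DecidableEq V]
    (w : V → V → ℝ) (S : Finset V) : ℝ :=
  ∑ u ∈ S, ∑ v ∈ Sᶜ, w u v

lemma cutval_nonneg {V : Type*} [Fintype V] [DecidableEq V]
    (w : V → V → ℝ) (hnn : ∀ u v, 0 ≤ w u v) (S : Finset V) : 0 ≤ cutval w S :=
  Finset.sum_nonneg fun _ _ => Finset.sum_nonneg fun _ _ => hnn _ _

lemma cutval_union_le {V : Type*} [Fintype V] [DecidableEq V]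
    (w : V → V → ℝ) (hnn : ∀ u v, 0 ≤ w u v) (A B : Finset V) :
    cutval w (A ∪ B) ≤ cutval w A + cutval w B := by
  have hAle : ∑ u ∈ A, ∑ v ∈ (A ∪ B)ᶜ, w u v ≤ cutval w A :=
    Finset.sum_le_sum fun u _ =>
      Finset.sum_le_sum_of_subset_of_nonneg
        (Finset.compl_subset_compl.mpr Finset.subset_union_left)
        (fun v _ _ => hnn u v)
  have hBle : ∑ u ∈ B, ∑ v ∈ (A ∪ B)ᶜ, w u v ≤ cutval w B :=
    Finset.sum_le_sum fun u _ =>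
      Finset.sum_le_sum_of_subset_of_nonneg
        (Finset.compl_subset_compl.mpr Finset.subset_union_right)
        (fun v _ _ => hnn u v)
  have hkey := Finset.sum_union_inter (s₁ := A) (s₂ := B)
    (f := fun u => ∑ v ∈ (A ∪ B)ᶜ, w u v)
  have hnng : 0 ≤ ∑ u ∈ A ∩ B, ∑ v ∈ (A ∪ B)ᶜ, w u v :=
    Finset.sum_nonneg fun u _ => Finset.sum_nonneg fun v _ => hnn u v
  have : cutval w (A ∪ B) = ∑ u ∈ A ∪ B, ∑ v ∈ (A ∪ B)ᶜ, w u v := rfl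
  linarith

lemma cutval_biUnion_le {V : Type*} [Fintype V] [DecidableEq V] {ι : Type*} [DecidableEq ι]
    (w : V → V → ℝ) (hnn : ∀ u v, 0 ≤ w u v) (s : Finset ι) (S : ι → Finset V) :
    cutval w (s.biUnion S) ≤ ∑ i ∈ s, cutval w (S i) := by
  induction s using Finset.cons_induction with
  | empty => simp [cutval]
  | cons a s ha ih =>
    rw [Finset.cons_eq_insert, Finset.sum_insert ha]
    refine le_trans ?_ (add_le_add le_rfl ih)
    rw [Finset.biUnion_insert]
    exact cutval_union_le w hnn _ _

lemma cutval_compl {V : Type*} [Fintype V] [DecidableEq V]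
    (w : V → V → ℝ) (hsymm : ∀ u v, w u v = w v u) (S : Finset V) :
    cutval w Sᶜ = cutval w S := by
  unfold cutval
  rw [compl_compl, Finset.sum_comm]
  exact Finset.sum_congr rfl fun u _ => Finset.sum_congr rfl fun v _ => hsymm _ _

/-- The trivial `O(k^{1−1/p})`-approximation: given disjoint sets `S_i` containing the
terminals with `cut(S_i) ≤ cut(P_i)` for an arbitrary multiway cut `(P_i)`, merging the
leftover vertices `R` into `S₁` yields a multiway cut with
`cut(S₁ ∪ R)^p + Σ_{i≥2} cut(S_i)^p ≤ (2^p k^{p−1} + 1)·Σ_i cut(P_i)^p`; in particular its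
`ℓ_p`-norm objective value is at most `3·k^{1−1/p}` times that of `(P_i)`. -/
theorem trivial_approximation {V : Type*} [Fintype V] [DecidableEq V]
    (w : V → V → ℝ) (hsymm : ∀ u v, w u v = w v u) (hnn : ∀ u v, 0 ≤ w u v)
    (k : ℕ) (hk : 1 ≤ k) (t : Fin k → V) (htinj : Function.Injective t)
    (S P : Fin k → Finset V)
    (hSdisj : ∀ i j, i ≠ j → Disjoint (S i) (S j)) (htS : ∀ i, t i ∈ S i)
    (hPdisj : ∀ i j, i ≠ j → Disjoint (P i) (P j))
    (hPcover : Finset.univ.biUnion P = Finset.univ)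
    (htP : ∀ i, t i ∈ P i)
    (hSP : ∀ i, cutval w (S i) ≤ cutval w (P i))
    (p : ℝ) (hp : 1 ≤ p)
    (R : Finset V) (hR : R = Finset.univ \ Finset.univ.biUnion S) :
    cutval w (S ⟨0, hk⟩ ∪ R) ^ p + ∑ i ∈ Finset.univ.erase ⟨0, hk⟩, cutval w (S i) ^ p ≤
        ((2 : ℝ) ^ p * (k : ℝ) ^ (p - 1) + 1) * ∑ i, cutval w (P i) ^ p ∧
      (cutval w (S ⟨0, hk⟩ ∪ R) ^ p +
          ∑ i ∈ Finset.univ.erase ⟨0, hk⟩, cutval w (S i) ^ p) ^ (1 / p) ≤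
        3 * (k : ℝ) ^ (1 - 1 / p) * (∑ i, cutval w (P i) ^ p) ^ (1 / p) := by
  have hp0 : (0:ℝ) < p := lt_of_lt_of_le one_pos hp
  set i0 : Fin k := ⟨0, hk⟩
  set T : ℝ := ∑ i, cutval w (P i) with hT
  set Q : ℝ := ∑ i, cutval w (P i) ^ p with hQ
  have hkr : (0:ℝ) < (k : ℝ) := by exact_mod_cast hk
  have hkr1 : (1:ℝ) ≤ (k : ℝ) := by exact_mod_cast hk
  have hcP : ∀ i, 0 ≤ cutval w (P i) := fun i => cutval_nonneg w hnn (P i)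
  have hcS : ∀ i, 0 ≤ cutval w (S i) := fun i => cutval_nonneg w hnn (S i)
  have hT0 : 0 ≤ T := Finset.sum_nonneg fun i _ => hcP i
  have hQ0 : 0 ≤ Q := Finset.sum_nonneg fun i _ =>
    Real.rpow_nonneg (hcP i) p
  -- cut of R
  have hRcompl : R = (Finset.univ.biUnion S)ᶜ := by
    rw [hR, Finset.compl_eq_univ_sdiff]
  have hcutR : cutval w R ≤ T := by
    rw [hRcompl, cutval_compl w hsymm]
    exact le_trans (cutval_biUnion_le w hnn _ _)
      (Finset.sum_le_sum fun i _ => hSP i)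
  -- bound on merged piece
  have hA : cutval w (S i0 ∪ R) ≤ 2 * T := by
    have h1 := cutval_union_le w hnn (S i0) R
    have h2 : cutval w (P i0) ≤ T :=
      Finset.single_le_sum (fun i _ => hcP i) (Finset.mem_univ i0)
    have := hSP i0
    linarith
  have hA0 : 0 ≤ cutval w (S i0 ∪ R) := cutval_nonneg w hnn _
  -- Jensen: T ^ p ≤ k ^ (p-1) * Q
  have jensen : T ^ p ≤ (k : ℝ) ^ (p - 1) * Q := by
    have h := Real.rpow_arith_mean_le_arith_mean_rpow Finset.univ
      (fun _ : Fin k => ((k : ℝ))⁻¹) (fun i => cutval w (P i))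
      (fun i _ => by positivity) (by
        simp [Finset.sum_const, Finset.card_univ]
        field_simp) (fun i _ => hcP i) hp
    rw [← Finset.mul_sum, ← Finset.mul_sum, ← hT, ← hQ,
      Real.mul_rpow (by positivity) hT0] at h
    have hkp : (0:ℝ) < (k : ℝ) ^ p := Real.rpow_pos_of_pos hkr p
    have h2 : (k : ℝ) ^ p * (((k:ℝ)⁻¹) ^ p * T ^ p) ≤ (k : ℝ) ^ p * ((k:ℝ)⁻¹ * Q) :=
      mul_le_mul_of_nonneg_left h hkp.le
    have hinv : (k : ℝ) ^ p * ((k:ℝ)⁻¹) ^ p = 1 := by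
      rw [← Real.mul_rpow hkr.le (by positivity), mul_inv_cancel₀ hkr.ne',
        Real.one_rpow]
    have hsub : (k : ℝ) ^ p * (k:ℝ)⁻¹ = (k : ℝ) ^ (p - 1) := by
      rw [Real.rpow_sub hkr, Real.rpow_one, div_eq_mul_inv]
    calc T ^ p = (k : ℝ) ^ p * ((k:ℝ)⁻¹) ^ p * T ^ p := by rw [hinv, one_mul]
      _ = (k : ℝ) ^ p * (((k:ℝ)⁻¹) ^ p * T ^ p) := by ring
      _ ≤ (k : ℝ) ^ p * ((k:ℝ)⁻¹ * Q) := h2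
      _ = (k : ℝ) ^ (p - 1) * Q := by rw [← mul_assoc, hsub]
  have hApow : cutval w (S i0 ∪ R) ^ p ≤ 2 ^ p * ((k : ℝ) ^ (p - 1) * Q) := by
    calc cutval w (S i0 ∪ R) ^ p ≤ (2 * T) ^ p :=
          Real.rpow_le_rpow hA0 hA hp0.le
      _ = 2 ^ p * T ^ p := Real.mul_rpow (by norm_num) hT0
      _ ≤ 2 ^ p * ((k : ℝ) ^ (p - 1) * Q) := by
          exact mul_le_mul_of_nonneg_left jensen (Real.rpow_nonneg (by norm_num) p)
  have hSsum : ∑ i ∈ Finset.univ.erase i0, cutval w (S i) ^ p ≤ Q := by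
    calc ∑ i ∈ Finset.univ.erase i0, cutval w (S i) ^ p
        ≤ ∑ i ∈ Finset.univ.erase i0, cutval w (P i) ^ p :=
          Finset.sum_le_sum fun i _ => Real.rpow_le_rpow (hcS i) (hSP i) hp0.le
      _ ≤ Q := Finset.sum_le_sum_of_subset_of_nonneg (Finset.erase_subset _ _)
          (fun i _ _ => Real.rpow_nonneg (hcP i) p)
  have main : cutval w (S i0 ∪ R) ^ p + ∑ i ∈ Finset.univ.erase i0, cutval w (S i) ^ p ≤
      ((2 : ℝ) ^ p * (k : ℝ) ^ (p - 1) + 1) * Q := by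
    rw [add_mul, one_mul, mul_assoc]
    linarith
  refine ⟨main, ?_⟩
  -- second part
  have hL0 : 0 ≤ cutval w (S i0 ∪ R) ^ p +
      ∑ i ∈ Finset.univ.erase i0, cutval w (S i) ^ p := by
    exact add_nonneg (Real.rpow_nonneg hA0 p)
      (Finset.sum_nonneg fun i _ => Real.rpow_nonneg (hcS i) p)
  have h21 : (2:ℝ) ^ p + 1 ≤ 3 ^ p := by
    have h := NNReal.add_rpow_le_rpow_add (2 : NNReal) 1 hp
    have h' : ((2 : NNReal) ^ p + (1 : NNReal) ^ p : NNReal) ≤ ((2 + 1 : NNReal)) ^ p := h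
    have := NNReal.coe_le_coe.mpr h'
    push_cast [NNReal.coe_rpow] at this
    norm_num at this
    linarith
  have hk1 : (1:ℝ) ≤ (k : ℝ) ^ (p - 1) :=
    Real.one_le_rpow hkr1 (by linarith)
  have hcoef : (2:ℝ) ^ p * (k : ℝ) ^ (p - 1) + 1 ≤ 3 ^ p * (k : ℝ) ^ (p - 1) := by
    have h2p : (0:ℝ) ≤ (2:ℝ) ^ p := Real.rpow_nonneg (by norm_num) p
    nlinarith
  have hcoef0 : (0:ℝ) ≤ (2:ℝ) ^ p * (k : ℝ) ^ (p - 1) + 1 := by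
    have h2p : (0:ℝ) ≤ (2:ℝ) ^ p := Real.rpow_nonneg (by norm_num) p
    have := Real.rpow_nonneg hkr.le (p - 1)
    nlinarith
  have step1 : (cutval w (S i0 ∪ R) ^ p +
      ∑ i ∈ Finset.univ.erase i0, cutval w (S i) ^ p) ^ (1 / p) ≤
      (((2 : ℝ) ^ p * (k : ℝ) ^ (p - 1) + 1) * Q) ^ (1 / p) :=
    Real.rpow_le_rpow hL0 main (by positivity)
  have step2 : (((2 : ℝ) ^ p * (k : ℝ) ^ (p - 1) + 1) * Q) ^ (1 / p) =
      ((2 : ℝ) ^ p * (k : ℝ) ^ (p - 1) + 1) ^ (1 / p) * Q ^ (1 / p) :=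
    Real.mul_rpow hcoef0 hQ0
  have step3 : ((2 : ℝ) ^ p * (k : ℝ) ^ (p - 1) + 1) ^ (1 / p) ≤
      3 * (k : ℝ) ^ (1 - 1 / p) := by
    calc ((2 : ℝ) ^ p * (k : ℝ) ^ (p - 1) + 1) ^ (1 / p)
        ≤ ((3:ℝ) ^ p * (k : ℝ) ^ (p - 1)) ^ (1 / p) :=
          Real.rpow_le_rpow hcoef0 hcoef (by positivity)
      _ = 3 * (k : ℝ) ^ (1 - 1 / p) := by
          rw [Real.mul_rpow (Real.rpow_nonneg (by norm_num) p)
            (Real.rpow_nonneg hkr.le _), ← Real.rpow_mul (by norm_num : (0:ℝ) ≤ 3),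
            ← Real.rpow_mul hkr.le, mul_one_div, div_self hp0.ne', Real.rpow_one]
          congr 1
          rw [mul_one_div, sub_div, div_self hp0.ne']
  calc (cutval w (S i0 ∪ R) ^ p +
      ∑ i ∈ Finset.univ.erase i0, cutval w (S i) ^ p) ^ (1 / p)
      ≤ ((2 : ℝ) ^ p * (k : ℝ) ^ (p - 1) + 1) ^ (1 / p) * Q ^ (1 / p) := by
        rw [← step2]; exact step1
    _ ≤ 3 * (k : ℝ) ^ (1 - 1 / p) * Q ^ (1 / p) :=
        mul_le_mul_of_nonneg_right step3 (Real.rpow_nonneg hQ0 _)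
end

section
/- Let p > 1 be real and m ≥ 1 an integer, and set d := (12m + 12)^{1/(p−1)}. Then (2d + 1/12)^p − (2d)^p > m + (1/4)^p. (In particular, (2d + 1/12)^p − (2d)^p ≥ p(2d)^{p−1}/12 = 2^{p−1}·p·(m+1) > m + (1/4)^p.) -/
/-- Analytic core of the planar hardness reduction from 3-partition: for `p > 1`, `m ≥ 1`
and `d = (12m+12)^{1/(p−1)}`, we have `(2d + 1/12)^p − (2d)^p > m + (1/4)^p`. -/
theorem planar_core_inequality (p : ℝ) (hp : 1 < p) (m : ℕ) (hm : 1 ≤ m)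
    (d : ℝ) (hd : d = (12 * (m : ℝ) + 12) ^ (1 / (p - 1))) :
    (m : ℝ) + (1 / 4 : ℝ) ^ p < (2 * d + 1 / 12) ^ p - (2 * d) ^ p := by
  have hp0 : 0 < p - 1 := by linarith
  have hb : (0:ℝ) < 12 * (m : ℝ) + 12 := by positivity
  have hd0 : 0 < d := hd ▸ Real.rpow_pos_of_pos hb _
  have ha : (0:ℝ) < 2 * d := by linarith
  have hdp : d ^ (p - 1) = 12 * (m : ℝ) + 12 := by
    rw [hd, ← Real.rpow_mul hb.le, one_div, inv_mul_cancel₀ hp0.ne', Real.rpow_one]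
  -- Bernoulli: (1 + s)^p ≥ 1 + p s, with s = 1/(24 d)
  have hs : (0:ℝ) < 1 / (24 * d) := by positivity
  have hbern : 1 + p * (1 / (24 * d)) ≤ (1 + 1 / (24 * d)) ^ p :=
    one_add_mul_self_le_rpow_one_add (by linarith) hp.le
  have hsplit : (2 * d + 1 / 12) ^ p = (2 * d) ^ p * (1 + 1 / (24 * d)) ^ p := by
    rw [← Real.mul_rpow ha.le (by linarith)]
    congr 1
    field_simp
    ring
  have key : (2 * d) ^ p * (1 + p * (1 / (24 * d))) ≤ (2 * d + 1 / 12) ^ p := by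
    rw [hsplit]
    exact mul_le_mul_of_nonneg_left hbern (Real.rpow_nonneg ha.le p)
  -- compute (2d)^p * (p / (24 d)) = p * 2^(p-1) * (m+1)
  have h2d : (2 * d) ^ p = 2 * d * (2 * d) ^ (p - 1) := by
    nth_rewrite 1 [show p = 1 + (p - 1) by ring]
    rw [Real.rpow_one_add' ha.le (by linarith)]
  have h2dp : (2 * d) ^ (p - 1) = 2 ^ (p - 1) * (12 * (m : ℝ) + 12) := by
    rw [Real.mul_rpow (by norm_num) hd0.le, hdp]
  have htwo : (1:ℝ) < 2 ^ (p - 1) :=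
    Real.one_lt_rpow_iff_of_pos (by norm_num) |>.mpr (Or.inl ⟨by norm_num, hp0⟩)
  have hq : (1 / 4 : ℝ) ^ p < 1 :=
    Real.rpow_lt_one (by norm_num) (by norm_num) (by linarith)
  have hexpand : (2 * d) ^ p * (1 + p * (1 / (24 * d)))
      = (2 * d) ^ p + p * 2 ^ (p - 1) * ((m : ℝ) + 1) := by
    have : (2 * d) ^ p * (p * (1 / (24 * d))) = p * 2 ^ (p - 1) * ((m : ℝ) + 1) := by
      rw [h2d, h2dp]
      field_simp
      ring
    linarith [this]
  have hm1 : (1:ℝ) ≤ (m : ℝ) := by exact_mod_cast hm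
  have hbig : (m : ℝ) + 1 < p * 2 ^ (p - 1) * ((m : ℝ) + 1) := by
    have h1 : 1 < p * 2 ^ (p - 1) := by nlinarith
    nlinarith [mul_pos (show (0:ℝ) < (m:ℝ) + 1 by linarith) (show (0:ℝ) < p * 2 ^ (p - 1) - 1 by linarith)]
  linarith [key, hexpand ▸ key]
end

section
/- Fix a real p > 1. In the bisection-reduction instance (with G = (V,E) simple with |V| = n even, unit edge weights, integer C ≥ 0, a := max{1, 8n³/(p−1), 2C+1}, b := 1 + max{1, (2an+C)^{p/(p−1)}, 3an}, graph G' on V' := V ∪ {u,d,ℓ,r} with weight 1 on edges of E, weight a on {v,x} for all v ∈ V and x ∈ {u,d,ℓ,r}, and weight b on {u,d}): if (P_u, P_d, P_ℓ, P_r) is a partition of V' with u ∈ P_u, d ∈ P_d, ℓ ∈ P_ℓ, r ∈ P_r and cut(P_u)^p + cut(P_d)^p + cut(P_ℓ)^p + cut(P_r)^p ≤ 2(b+an)^p + 2(2an+C)^p, then P_u = {u} and P_d = {d}. -/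
open Finset

/-- Edge weights of the graph `G'` in the reduction from graph bisection: original edges
have weight `1`; each original vertex is joined to each of the four new terminals
`u,d,ℓ,r` (encoded as `Sum.inr 0, 1, 2, 3`) with weight `a`; the edge `{u,d}` has
weight `b`. -/
noncomputable def wBis {V : Type*} (G : SimpleGraph V) [DecidableRel G.Adj] (a b : ℝ) :
    (V ⊕ Fin 4) → (V ⊕ Fin 4) → ℝ
  | Sum.inl x, Sum.inl y => if G.Adj x y then 1 else 0
  | Sum.inl _, Sum.inr _ => a
  | Sum.inr _, Sum.inl _ => a
  | Sum.inr i, Sum.inr j => if (i = 0 ∧ j = 1) ∨ (i = 1 ∧ j = 0) then b else 0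

lemma wBis_mono {V : Type*} (G : SimpleGraph V) [DecidableRel G.Adj] {a b : ℝ}
    (x y : V ⊕ Fin 4) : wBis ⊥ a b x y ≤ wBis G a b x y := by
  rcases x with v | i <;> rcases y with w | j <;> simp [wBis] <;> split_ifs <;> norm_num

lemma bterm_sum (b : ℝ) (i0 : Fin 4) :
    ∑ j ∈ ({i0}ᶜ : Finset (Fin 4)), (if (i0 = 0 ∧ j = 1) ∨ (i0 = 1 ∧ j = 0) then b else 0)
      = if i0 = 0 ∨ i0 = 1 then b else 0 := by
  have hfi0 : (if (i0 = 0 ∧ i0 = 1) ∨ (i0 = 1 ∧ i0 = 0) then b else 0) = 0 :=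
    if_neg (by rintro (⟨hh1, hh2⟩ | ⟨hh1, hh2⟩) <;> (rw [hh1] at hh2; exact absurd hh2 (by decide)))
  rw [compl_eq_univ_sdiff, sum_sdiff_eq_sub (subset_univ _), sum_singleton,
    Fin.sum_univ_four, hfi0]
  simp +decide only [and_true, and_false, false_or, or_false]
  split_ifs <;> simp_all +decide

lemma cut_lb {V : Type*} [Fintype V] [DecidableEq V]
    (G : SimpleGraph V) [DecidableRel G.Adj] {a b : ℝ} (ha : 0 ≤ a) (hb : 0 ≤ b)
    (S : Finset (V ⊕ Fin 4)) (i0 : Fin 4) (hB : S.toRight = {i0}) :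
    (if i0 = 0 ∨ i0 = 1 then b else 0) + a * (Fintype.card V : ℝ)
      + 2 * a * (S.toLeft.card : ℝ) ≤ cutval (wBis G a b) S := by
  have hmono : cutval (wBis ⊥ a b) S ≤ cutval (wBis G a b) S :=
    Finset.sum_le_sum fun x _ => Finset.sum_le_sum fun y _ => wBis_mono G x y
  refine le_trans ?_ hmono
  have hS : S = S.toLeft.disjSum S.toRight := (toLeft_disjSum_toRight).symm
  have hSc : Sᶜ = S.toLeftᶜ.disjSum S.toRightᶜ := by ext x; cases x <;> simp
  have h1 : ∀ v w : V, wBis (⊥ : SimpleGraph V) a b (Sum.inl v) (Sum.inl w) = 0 := by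
    intro v w; simp [wBis]
  have h2 : ∀ (v : V) (j : Fin 4), wBis (⊥ : SimpleGraph V) a b (Sum.inl v) (Sum.inr j) = a := by
    intro v j; simp [wBis]
  have h3 : ∀ (i : Fin 4) (w : V), wBis (⊥ : SimpleGraph V) a b (Sum.inr i) (Sum.inl w) = a := by
    intro i w; simp [wBis]
  have hbterm : ∑ j ∈ ({i0}ᶜ : Finset (Fin 4)), wBis (⊥ : SimpleGraph V) a b (Sum.inr i0) (Sum.inr j)
      = if i0 = 0 ∨ i0 = 1 then b else 0 := bterm_sum b i0
  have hcard : ({i0}ᶜ : Finset (Fin 4)).card = 3 := by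
    rw [card_compl]; simp
  have hcardL : (S.toLeftᶜ.card : ℝ) = (Fintype.card V : ℝ) - (S.toLeft.card : ℝ) := by
    rw [card_compl, Nat.cast_sub (card_le_univ _)]
  rw [cutval, hSc]
  nth_rewrite 2 [hS]
  rw [sum_disjSum]
  simp only [sum_disjSum, h1, h2, h3, sum_const, Finset.sum_const_zero, zero_add,
    nsmul_eq_mul, hB, sum_singleton, hcard, hbterm]
  rw [hcardL]
  have hk : (0:ℝ) ≤ (S.toLeft.card : ℝ) := Nat.cast_nonneg _
  push_cast
  nlinarith [hk]

lemma key_ineq (p a b n CC : ℝ) (hp : 1 < p) (ha1 : 1 ≤ a) (hn : 0 ≤ n) (hC : 0 ≤ CC)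
    (hb2 : 2 ≤ b) (hbC : (2 * a * n + CC) ^ (p / (p - 1)) ≤ b - 1)
    (c0 c1 c2 c3 : ℝ)
    (h0 : b + a * n + 2 * a ≤ c0) (h1 : b + a * n ≤ c1)
    (h2 : a * n ≤ c2) (h3 : a * n ≤ c3) :
    2 * (b + a * n) ^ p + 2 * (2 * a * n + CC) ^ p < c0 ^ p + c1 ^ p + c2 ^ p + c3 ^ p := by
  have hp1 : (0:ℝ) < p - 1 := by linarith
  have han : 0 ≤ a * n := mul_nonneg (by linarith) hn
  have hX : (0:ℝ) < b + a * n := by linarith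
  have hY : (0:ℝ) ≤ 2 * a * n + CC := by linarith
  generalize hXdef : b + a * n = X at *
  generalize hYdef : 2 * a * n + CC = Y at *
  -- monotonicity in the base
  have hc0 : (X + 2 * a) ^ p ≤ c0 ^ p :=
    Real.rpow_le_rpow (by nlinarith) h0 (by linarith)
  have hc1 : X ^ p ≤ c1 ^ p := Real.rpow_le_rpow hX.le h1 (by linarith)
  have hc2 : (a * n) ^ p ≤ c2 ^ p := Real.rpow_le_rpow han h2 (by linarith)
  have hc3 : (a * n) ^ p ≤ c3 ^ p := Real.rpow_le_rpow han h3 (by linarith)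
  have hannn : (0:ℝ) ≤ (a * n) ^ p := Real.rpow_nonneg han p
  -- Bernoulli step
  have hs : (0:ℝ) ≤ 2 * a / X := by positivity
  have hbern : 1 + p * (2 * a / X) ≤ (1 + 2 * a / X) ^ p :=
    one_add_mul_self_le_rpow_one_add (by linarith) hp.le
  have hsplit : (X + 2 * a) ^ p = X ^ p * (1 + 2 * a / X) ^ p := by
    rw [← Real.mul_rpow hX.le (by linarith)]
    congr 1
    field_simp
  have hXp : (0:ℝ) < X ^ p := Real.rpow_pos_of_pos hX p
  have hXp1 : (0:ℝ) < X ^ (p - 1) := Real.rpow_pos_of_pos hX (p - 1)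
  have hXdiv : X ^ p / X = X ^ (p - 1) := by
    rw [Real.rpow_sub hX, Real.rpow_one]
  have hbern2 : X ^ p + 2 * a * p * X ^ (p - 1) ≤ (X + 2 * a) ^ p := by
    rw [hsplit]
    have := mul_le_mul_of_nonneg_left hbern hXp.le
    calc X ^ p + 2 * a * p * X ^ (p - 1)
        = X ^ p * (1 + p * (2 * a / X)) := by
          rw [← hXdiv]; field_simp
      _ ≤ X ^ p * (1 + 2 * a / X) ^ p := this
  -- Y^p ≤ X^(p-1)
  have hYp : Y ^ p ≤ X ^ (p - 1) := by
    have e1 : Y ^ p = (Y ^ (p / (p - 1))) ^ (p - 1) := by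
      rw [← Real.rpow_mul hY]
      congr 1
      field_simp
    have e2 : (Y ^ (p / (p - 1))) ^ (p - 1) ≤ (b - 1) ^ (p - 1) :=
      Real.rpow_le_rpow (Real.rpow_nonneg hY _) hbC hp1.le
    have e3 : (b - 1) ^ (p - 1) ≤ X ^ (p - 1) :=
      Real.rpow_le_rpow (by linarith) (by nlinarith) hp1.le
    linarith [e1.le.trans (e2.trans e3)]
  have hap : 1 < a * p := by nlinarith [mul_le_mul_of_nonneg_right ha1 (le_of_lt (lt_trans one_pos hp))]
  have hfin : 2 * Y ^ p < 2 * a * p * X ^ (p - 1) := by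
    have h1' : 2 * Y ^ p ≤ 2 * X ^ (p - 1) := by linarith
    have h2' : 1 * X ^ (p - 1) < (a * p) * X ^ (p - 1) := mul_lt_mul_of_pos_right hap hXp1
    nlinarith [h1', h2']
  linarith [hc0, hc1, hc2, hc3, hbern2, hfin, hannn]

lemma disjSum_empty_singleton {V : Type*} [DecidableEq V] (i : Fin 4) :
    (∅ : Finset V).disjSum ({i} : Finset (Fin 4)) = {Sum.inr i} := by
  ext x; cases x <;> simp


set_option maxHeartbeats 1000000 in
/-- In the bisection-reduction instance, any multiway cut whose `ℓ_p`-norm objective value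
raised to the `p`-th power is at most `2(b+an)^p + 2(2an+C)^p` has the parts containing
`u` and `d` as singletons. -/
theorem bisection_reduction_singletons {V : Type*} [Fintype V] [DecidableEq V]
    (p : ℝ) (hp : 1 < p) (G : SimpleGraph V) [DecidableRel G.Adj] (C : ℕ)
    (n : ℝ) (hn : n = Fintype.card V) (hneven : Even (Fintype.card V))
    (a b : ℝ)
    (ha : a = max 1 (max (8 * n ^ 3 / (p - 1)) (2 * (C : ℝ) + 1)))
    (hb : b = 1 + max 1 (max ((2 * a * n + (C : ℝ)) ^ (p / (p - 1))) (3 * a * n)))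
    (Pu Pd Pl Pr : Finset (V ⊕ Fin 4))
    (hu : Sum.inr 0 ∈ Pu) (hd : Sum.inr 1 ∈ Pd) (hl : Sum.inr 2 ∈ Pl) (hr : Sum.inr 3 ∈ Pr)
    (hud : Disjoint Pu Pd) (hul : Disjoint Pu Pl) (hur : Disjoint Pu Pr)
    (hdl : Disjoint Pd Pl) (hdr : Disjoint Pd Pr) (hlr : Disjoint Pl Pr)
    (hcover : Pu ∪ Pd ∪ Pl ∪ Pr = Finset.univ)
    (hcheap : cutval (wBis G a b) Pu ^ p + cutval (wBis G a b) Pd ^ p +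
        cutval (wBis G a b) Pl ^ p + cutval (wBis G a b) Pr ^ p ≤
      2 * (b + a * n) ^ p + 2 * (2 * a * n + (C : ℝ)) ^ p) :
    Pu = {Sum.inr 0} ∧ Pd = {Sum.inr 1} := by
  have ha1 : 1 ≤ a := by rw [ha]; exact le_max_left _ _
  have ha0 : 0 ≤ a := by linarith
  have hb2 : 2 ≤ b := by
    rw [hb]; have := le_max_left (1:ℝ) (max ((2 * a * n + (C : ℝ)) ^ (p / (p - 1))) (3 * a * n))
    linarith
  have hb0 : 0 ≤ b := by linarith
  have hn0 : 0 ≤ n := by rw [hn]; exact Nat.cast_nonneg _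
  have hC0 : (0:ℝ) ≤ (C : ℝ) := Nat.cast_nonneg _
  have hbC : (2 * a * n + (C : ℝ)) ^ (p / (p - 1)) ≤ b - 1 := by
    rw [hb]
    have := (le_max_left ((2 * a * n + (C : ℝ)) ^ (p / (p - 1))) (3 * a * n)).trans
      (le_max_right 1 _)
    linarith
  -- non-membership of wrong terminals
  have hu1 : Sum.inr 1 ∉ Pu := fun h => disjoint_left.mp hud h hd
  have hu2 : Sum.inr 2 ∉ Pu := fun h => disjoint_left.mp hul h hl
  have hu3 : Sum.inr 3 ∉ Pu := fun h => disjoint_left.mp hur h hr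
  have hd0 : Sum.inr 0 ∉ Pd := fun h => disjoint_left.mp hud hu h
  have hd2 : Sum.inr 2 ∉ Pd := fun h => disjoint_left.mp hdl h hl
  have hd3 : Sum.inr 3 ∉ Pd := fun h => disjoint_left.mp hdr h hr
  have hl0 : Sum.inr 0 ∉ Pl := fun h => disjoint_left.mp hul hu h
  have hl1 : Sum.inr 1 ∉ Pl := fun h => disjoint_left.mp hdl hd h
  have hl3 : Sum.inr 3 ∉ Pl := fun h => disjoint_left.mp hlr h hr
  have hr0 : Sum.inr 0 ∉ Pr := fun h => disjoint_left.mp hur hu h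
  have hr1 : Sum.inr 1 ∉ Pr := fun h => disjoint_left.mp hdr hd h
  have hr2 : Sum.inr 2 ∉ Pr := fun h => disjoint_left.mp hlr hl h
  have toRight_eq : ∀ (S : Finset (V ⊕ Fin 4)) (i : Fin 4), Sum.inr i ∈ S →
      (∀ j : Fin 4, j ≠ i → Sum.inr j ∉ S) → S.toRight = {i} := by
    intro S i hi hothers
    ext j
    simp only [mem_toRight, mem_singleton]
    constructor
    · intro hj
      by_contra hne
      exact hothers j hne hj
    · rintro rfl; exact hi
  have hPuR : Pu.toRight = {0} := by
    refine toRight_eq Pu 0 hu fun j hne hj => ?_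
    rcases j with ⟨jv, hjv⟩
    interval_cases jv
    · exact hne rfl
    · exact hu1 hj
    · exact hu2 hj
    · exact hu3 hj
  have hPdR : Pd.toRight = {1} := by
    refine toRight_eq Pd 1 hd fun j hne hj => ?_
    rcases j with ⟨jv, hjv⟩
    interval_cases jv
    · exact hd0 hj
    · exact hne rfl
    · exact hd2 hj
    · exact hd3 hj
  have hPlR : Pl.toRight = {2} := by
    refine toRight_eq Pl 2 hl fun j hne hj => ?_
    rcases j with ⟨jv, hjv⟩
    interval_cases jv
    · exact hl0 hj
    · exact hl1 hj
    · exact hne rfl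
    · exact hl3 hj
  have hPrR : Pr.toRight = {3} := by
    refine toRight_eq Pr 3 hr fun j hne hj => ?_
    rcases j with ⟨jv, hjv⟩
    interval_cases jv
    · exact hr0 hj
    · exact hr1 hj
    · exact hr2 hj
    · exact hne rfl
  -- cut lower bounds
  have lbu := cut_lb G ha0 hb0 Pu 0 hPuR
  have lbd := cut_lb G ha0 hb0 Pd 1 hPdR
  have lbl := cut_lb G ha0 hb0 Pl 2 hPlR
  have lbr := cut_lb G ha0 hb0 Pr 3 hPrR
  rw [if_pos (show (0:Fin 4) = 0 ∨ (0:Fin 4) = 1 by decide)] at lbu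
  rw [if_pos (show (1:Fin 4) = 0 ∨ (1:Fin 4) = 1 by decide)] at lbd
  rw [if_neg (show ¬((2:Fin 4) = 0 ∨ (2:Fin 4) = 1) by decide)] at lbl
  rw [if_neg (show ¬((3:Fin 4) = 0 ∨ (3:Fin 4) = 1) by decide)] at lbr
  rw [← hn] at lbu lbd lbl lbr
  have hku0 : (0:ℝ) ≤ (Pu.toLeft.card : ℝ) := Nat.cast_nonneg _
  have hkd0 : (0:ℝ) ≤ (Pd.toLeft.card : ℝ) := Nat.cast_nonneg _
  have hkl0 : (0:ℝ) ≤ (Pl.toLeft.card : ℝ) := Nat.cast_nonneg _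
  have hkr0 : (0:ℝ) ≤ (Pr.toLeft.card : ℝ) := Nat.cast_nonneg _
  have hcut2 : a * n ≤ cutval (wBis G a b) Pl := by
    linarith [lbl, mul_nonneg ha0 hkl0]
  have hcut3 : a * n ≤ cutval (wBis G a b) Pr := by
    linarith [lbr, mul_nonneg ha0 hkr0]
  have hcut1u : b + a * n ≤ cutval (wBis G a b) Pu := by
    linarith [lbu, mul_nonneg ha0 hku0]
  have hcut1d : b + a * n ≤ cutval (wBis G a b) Pd := by
    linarith [lbd, mul_nonneg ha0 hkd0]
  constructor
  · by_cases hku : Pu.toLeft = ∅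
    · rw [← toLeft_disjSum_toRight (u := Pu), hku, hPuR, disjSum_empty_singleton]
    · exfalso
      have h1 : (1:ℝ) ≤ (Pu.toLeft.card : ℝ) := by
        have := Finset.card_pos.mpr (Finset.nonempty_iff_ne_empty.mpr hku)
        exact_mod_cast this
      have hcut0 : b + a * n + 2 * a ≤ cutval (wBis G a b) Pu := by
        have h2 := mul_le_mul_of_nonneg_left h1 ha0
        linarith [lbu, h2]
      have := key_ineq p a b n (C : ℝ) hp ha1 hn0 hC0 hb2 hbC
        (cutval (wBis G a b) Pu) (cutval (wBis G a b) Pd)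
        (cutval (wBis G a b) Pl) (cutval (wBis G a b) Pr)
        hcut0 hcut1d hcut2 hcut3
      linarith
  · by_cases hkd : Pd.toLeft = ∅
    · rw [← toLeft_disjSum_toRight (u := Pd), hkd, hPdR, disjSum_empty_singleton]
    · exfalso
      have h1 : (1:ℝ) ≤ (Pd.toLeft.card : ℝ) := by
        have := Finset.card_pos.mpr (Finset.nonempty_iff_ne_empty.mpr hkd)
        exact_mod_cast this
      have hcut0 : b + a * n + 2 * a ≤ cutval (wBis G a b) Pd := by
        have h2 := mul_le_mul_of_nonneg_left h1 ha0
        linarith [lbd, h2]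
      have := key_ineq p a b n (C : ℝ) hp ha1 hn0 hC0 hb2 hbC
        (cutval (wBis G a b) Pd) (cutval (wBis G a b) Pu)
        (cutval (wBis G a b) Pl) (cutval (wBis G a b) Pr)
        hcut0 hcut1u hcut2 hcut3
      linarith
end
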